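/- For every integer k ≥ 1, the meander of type 2|2|⋯|2|3 (with k top blocks of size 2 followed by one top block of size 3, on 2k+3 vertices) is Frobenius; that is, its meander graph is connected and acyclic. -/

import Mathlib

/-- The meander graph of type `a₁|a₂|⋯|a_ℓ` where `L = [a₁,…,a_ℓ]` is the list of top
block sizes, on vertex set `Fin (a₁ + ⋯ + a_ℓ)`, with top edges within each block and
bottom edges `j ↔ n - 1 - j` coming from the single bottom block of size `n = L.sum`. -/
def meander (L : List ℕ) : SimpleGraph (Fin L.sum) :=
  SimpleGraph.fromRel (fun u v =>
    (∃ k : Fin L.length, ∃ i : ℕ, i < L.get k ∧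
      (u : ℕ) = (L.take k.val).sum + i ∧
      (v : ℕ) = (L.take k.val).sum + (L.get k - 1 - i))
    ∨ ((u : ℕ) + (v : ℕ) = L.sum - 1))

/-- A connected component is a cycle component if every vertex in it has degree 2. -/
def SimpleGraph.IsCycleComponent {V : Type*} (G : SimpleGraph V)
    (c : G.ConnectedComponent) : Prop :=
  ∀ v : V, G.connectedComponentMk v = c → (G.neighborSet v).ncard = 2

/-- The number of connected components of `G` that are cycles. -/
noncomputable def numCycleComponents {V : Type*} (G : SimpleGraph V) : ℕ :=
  Nat.card {c : G.ConnectedComponent // G.IsCycleComponent c}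

/-- The number of connected components of `G` that are paths (i.e. not cycles). -/
noncomputable def numPathComponents {V : Type*} (G : SimpleGraph V) : ℕ :=
  Nat.card {c : G.ConnectedComponent // ¬ G.IsCycleComponent c}

/-- A meander is Frobenius if its graph is a single path, equivalently (as every vertex
has degree at most 2) connected and acyclic. -/
def IsFrobenius {V : Type*} (G : SimpleGraph V) : Prop :=
  G.Connected ∧ G.IsAcyclic

namespace MeanderAux

/-- position ↦ vertex along the path -/
def f (k i : ℕ) : ℕ :=
  if i = 0 then 2*k+1
  else if i = 1 then 1
  else if i = 2 then 0
  else if i = 3 then 2*k+2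
  else if i % 4 = 1 ∨ i % 4 = 2 then i / 2
  else 2*k+2 - i/2

/-- vertex ↦ position along the path -/
def g (k v : ℕ) : ℕ :=
  if v = 2*k+1 then 0
  else if v = 1 then 1
  else if v = 0 then 2
  else if v = 2*k+2 then 3
  else if v % 2 = 0 then (if 2*v+1 ≤ 2*k+2 then 2*v+1 else 4*k+4-2*v)
  else (if 2*v ≤ 2*k+2 then 2*v else 4*k+5-2*v)

/-- concrete adjacency for the meander of type 2|⋯|2|3 -/
def A (k u v : ℕ) : Prop :=
  (∃ j, j < k ∧ ((u = 2*j ∧ v = 2*j+1) ∨ (u = 2*j+1 ∧ v = 2*j))) ∨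
  (u = 2*k ∧ v = 2*k+2) ∨ (u = 2*k+2 ∧ v = 2*k) ∨ (u + v = 2*k+2)

lemma A_symm {k u v : ℕ} (h : A k u v) : A k v u := by
  obtain ⟨j, hj, h | h⟩ | h | h | h := h
  · exact Or.inl ⟨j, hj, Or.inr ⟨h.2, h.1⟩⟩
  · exact Or.inl ⟨j, hj, Or.inl ⟨h.2, h.1⟩⟩
  · exact Or.inr (Or.inr (Or.inl ⟨h.2, h.1⟩))
  · exact Or.inr (Or.inl ⟨h.2, h.1⟩)
  · exact Or.inr (Or.inr (Or.inr (by omega)))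

set_option maxHeartbeats 1000000 in
lemma fg {k : ℕ} (hk : 1 ≤ k) {v : ℕ} (hv : v ≤ 2*k+2) : f k (g k v) = v := by
  simp only [g]; split_ifs <;> simp only [f] <;> split_ifs <;>
    first | exact ‹False›.elim | omega

lemma g_le {k v : ℕ} (hk : 1 ≤ k) (hv : v ≤ 2*k+2) : g k v ≤ 2*k+2 := by
  simp only [g]; split_ifs <;> omega

lemma f_le {k i : ℕ} (hi : i ≤ 2*k+2) : f k i ≤ 2*k+2 := by
  simp only [f]; split_ifs <;> omega

set_option maxHeartbeats 2000000 in
lemma adj_dist {k : ℕ} (hk : 1 ≤ k) {u v : ℕ} (hu : u ≤ 2*k+2) (hv : v ≤ 2*k+2)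
    (h : A k u v) (hne : u ≠ v) : g k v = g k u + 1 ∨ g k u = g k v + 1 := by
  obtain ⟨j, hj, h⟩ | h | h | h := h <;>
    (simp only [g]; split_ifs <;> first | exact ‹False›.elim | omega)

lemma f_ge4 {k i : ℕ} (hi : 4 ≤ i) :
    f k i = if i % 4 = 1 ∨ i % 4 = 2 then i / 2 else 2*k+2 - i/2 := by
  simp only [f]
  rw [if_neg (by omega), if_neg (by omega), if_neg (by omega), if_neg (by omega)]

lemma step {k : ℕ} (hk : 1 ≤ k) {i : ℕ} (h : i + 1 ≤ 2*k+2) :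
    A k (f k i) (f k (i+1)) ∧ f k i ≠ f k (i+1) := by
  have f0 : f k 0 = 2*k+1 := rfl
  have f1 : f k 1 = 1 := rfl
  have f2 : f k 2 = 0 := rfl
  have f3 : f k 3 = 2*k+2 := rfl
  have f4 : f k 4 = 2*k := by rw [f_ge4 (by norm_num)]; norm_num
  rcases Nat.lt_or_ge i 4 with h4 | h4
  · interval_cases i
    · rw [f0, f1]
      exact ⟨Or.inr (Or.inr (Or.inr (by omega))), by omega⟩
    · rw [f1, f2]
      exact ⟨Or.inl ⟨0, hk, Or.inr (by omega)⟩, by omega⟩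
    · rw [f2, f3]
      exact ⟨Or.inr (Or.inr (Or.inr (by omega))), by omega⟩
    · rw [f3, f4]
      exact ⟨Or.inr (Or.inr (Or.inl (by omega))), by omega⟩
  · rw [f_ge4 h4, f_ge4 (by omega)]
    have h4m : i % 4 = 0 ∨ i % 4 = 1 ∨ i % 4 = 2 ∨ i % 4 = 3 := by omega
    obtain hm | hm | hm | hm := h4m
    · rw [if_neg (by omega), if_pos (by omega)]
      exact ⟨Or.inr (Or.inr (Or.inr (by omega))), by omega⟩
    · rw [if_pos (by omega), if_pos (by omega)]
      exact ⟨Or.inl ⟨i/4, by omega, Or.inl ⟨by omega, by omega⟩⟩, by omega⟩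
    · rw [if_pos (by omega), if_neg (by omega)]
      exact ⟨Or.inr (Or.inr (Or.inr (by omega))), by omega⟩
    · rw [if_neg (by omega), if_neg (by omega)]
      exact ⟨Or.inl ⟨k + 1 - (i+1)/4, by omega, Or.inr ⟨by omega, by omega⟩⟩, by omega⟩

lemma sum_L {k : ℕ} : (List.replicate k 2 ++ [3]).sum = 2*k+3 := by
  simp [List.sum_replicate, smul_eq_mul]; omega

lemma len_L {k : ℕ} : (List.replicate k 2 ++ [3]).length = k + 1 := by simp

lemma take_L {k j : ℕ} (hj : j ≤ k) : ((List.replicate k 2 ++ [3]).take j).sum = 2*j := by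
  rw [List.take_append_of_le_length (by simpa using hj), List.take_replicate,
    List.sum_replicate, smul_eq_mul, Nat.min_eq_left hj]
  omega

lemma get_L {k j : ℕ} (h : j < (List.replicate k 2 ++ [3]).length) :
    (List.replicate k 2 ++ [3]).get ⟨j, h⟩ = if j < k then 2 else 3 := by
  have hlen := h
  rw [len_L] at hlen
  rcases Nat.lt_or_ge j k with hj | hj
  · rw [List.get_eq_getElem, List.getElem_append_left (by simpa using hj), if_pos hj]
    simp
  · have hK : j = k := by omega
    rw [List.get_eq_getElem, List.getElem_append_right (by simpa using hj), if_neg (by omega)]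
    simp [hK]

lemma R_to_A {k : ℕ} {u v : Fin (List.replicate k 2 ++ [3]).sum}
    (hne : (u:ℕ) ≠ (v:ℕ))
    (h : (∃ K : Fin (List.replicate k 2 ++ [3]).length, ∃ i : ℕ,
        i < (List.replicate k 2 ++ [3]).get K ∧
        (u : ℕ) = ((List.replicate k 2 ++ [3]).take K.val).sum + i ∧
        (v : ℕ) = ((List.replicate k 2 ++ [3]).take K.val).sum +
          ((List.replicate k 2 ++ [3]).get K - 1 - i))
      ∨ ((u : ℕ) + (v : ℕ) = (List.replicate k 2 ++ [3]).sum - 1)) :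
    A k u v := by
  rcases h with ⟨⟨j, hjlt⟩, i, hi, hu, hv⟩ | hb
  · have hlen := hjlt
    rw [len_L] at hlen
    simp only [Fin.val_mk] at hu hv
    rw [get_L hjlt] at hi hv
    rw [take_L (show j ≤ k by omega)] at hu hv
    rcases Nat.lt_or_ge j k with hK | hK
    · rw [if_pos hK] at hi hv
      interval_cases i
      · exact Or.inl ⟨j, hK, Or.inl ⟨by omega, by omega⟩⟩
      · exact Or.inl ⟨j, hK, Or.inr ⟨by omega, by omega⟩⟩
    · rw [if_neg (by omega)] at hi hv
      interval_cases i
      · exact Or.inr (Or.inl ⟨by omega, by omega⟩)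
      · exact absurd (by omega : (u:ℕ) = (v:ℕ)) hne
      · exact Or.inr (Or.inr (Or.inl ⟨by omega, by omega⟩))
  · have hs := sum_L (k := k)
    exact Or.inr (Or.inr (Or.inr (by omega)))

lemma A_to_R {k : ℕ} {u v : Fin (List.replicate k 2 ++ [3]).sum}
    (h : A k u v) :
    (∃ K : Fin (List.replicate k 2 ++ [3]).length, ∃ i : ℕ,
        i < (List.replicate k 2 ++ [3]).get K ∧
        (u : ℕ) = ((List.replicate k 2 ++ [3]).take K.val).sum + i ∧
        (v : ℕ) = ((List.replicate k 2 ++ [3]).take K.val).sum +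
          ((List.replicate k 2 ++ [3]).get K - 1 - i))
      ∨ ((u : ℕ) + (v : ℕ) = (List.replicate k 2 ++ [3]).sum - 1) := by
  have hs := sum_L (k := k)
  obtain ⟨j, hj, hc | hc⟩ | hc | hc | hc := h
  · refine Or.inl ⟨⟨j, by rw [len_L]; omega⟩, 0, ?_, ?_, ?_⟩ <;>
      simp only [Fin.val_mk, get_L, take_L (le_of_lt hj), if_pos hj] <;> omega
  · refine Or.inl ⟨⟨j, by rw [len_L]; omega⟩, 1, ?_, ?_, ?_⟩ <;>
      simp only [Fin.val_mk, get_L, take_L (le_of_lt hj), if_pos hj] <;> omega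
  · refine Or.inl ⟨⟨k, by rw [len_L]; omega⟩, 0, ?_, ?_, ?_⟩ <;>
      simp only [Fin.val_mk, get_L, take_L (le_refl k), if_neg (lt_irrefl k)] <;> omega
  · refine Or.inl ⟨⟨k, by rw [len_L]; omega⟩, 2, ?_, ?_, ?_⟩ <;>
      simp only [Fin.val_mk, get_L, take_L (le_refl k), if_neg (lt_irrefl k)] <;> omega
  · exact Or.inr (by omega)

lemma meander_adj {k : ℕ} (u v : Fin (List.replicate k 2 ++ [3]).sum) :
    (meander (List.replicate k 2 ++ [3])).Adj u v ↔ ((u:ℕ) ≠ (v:ℕ) ∧ A k u v) := by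
  rw [meander, SimpleGraph.fromRel_adj]
  constructor
  · rintro ⟨hne, h | h⟩
    · exact ⟨fun e => hne (Fin.ext e), R_to_A (fun e => hne (Fin.ext e)) h⟩
    · exact ⟨fun e => hne (Fin.ext e), A_symm (R_to_A (fun e => hne (Fin.ext e.symm)) h)⟩
  · rintro ⟨hne, h⟩
    exact ⟨fun e => hne (congrArg Fin.val e), Or.inl (A_to_R h)⟩

lemma no_reach {k : ℕ} (hk : 1 ≤ k) (u v : Fin (List.replicate k 2 ++ [3]).sum)
    (hA : A k u v) (hne : (u:ℕ) ≠ (v:ℕ)) (hgd : g k (v:ℕ) = g k (u:ℕ) + 1) :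
    ¬ (meander (List.replicate k 2 ++ [3]) \
        SimpleGraph.fromEdgeSet {s(u,v)}).Reachable u v := by
  have hs := sum_L (k := k)
  intro hr
  obtain ⟨p⟩ := hr
  suffices H : ∀ {a b : Fin (List.replicate k 2 ++ [3]).sum},
      (meander (List.replicate k 2 ++ [3]) \
        SimpleGraph.fromEdgeSet {s(u,v)}).Walk a b →
      (g k (a:ℕ) ≤ g k (u:ℕ) ↔ g k (b:ℕ) ≤ g k (u:ℕ)) by
    have := (H p).mp le_rfl
    omega
  intro a b q
  induction q with
  | nil => exact Iff.rfl
  | @cons x y z h q ih =>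
    refine Iff.trans ?_ ih
    rw [SimpleGraph.sdiff_adj, SimpleGraph.fromEdgeSet_adj] at h
    obtain ⟨hadj, hnot⟩ := h
    obtain ⟨hne2, hA2⟩ := (meander_adj x y).mp hadj
    have hnedge : s(x, y) ≠ s(u, v) := fun e =>
      hnot ⟨by rw [e]; exact Set.mem_singleton _, fun ee => hne2 (congrArg Fin.val ee)⟩
    have hx2 : (x:ℕ) ≤ 2*k+2 := by have := x.isLt; omega
    have hy2 : (y:ℕ) ≤ 2*k+2 := by have := y.isLt; omega
    have hu2 : (u:ℕ) ≤ 2*k+2 := by have := u.isLt; omega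
    have hv2 : (v:ℕ) ≤ 2*k+2 := by have := v.isLt; omega
    have hd2 := adj_dist hk hx2 hy2 hA2 hne2
    have hcases : (g k (x:ℕ) ≤ g k (u:ℕ) ∧ g k (y:ℕ) ≤ g k (u:ℕ)) ∨
        (g k (u:ℕ) + 1 ≤ g k (x:ℕ) ∧ g k (u:ℕ) + 1 ≤ g k (y:ℕ)) ∨
        (g k (x:ℕ) = g k (u:ℕ) ∧ g k (y:ℕ) = g k (v:ℕ)) ∨
        (g k (x:ℕ) = g k (v:ℕ) ∧ g k (y:ℕ) = g k (u:ℕ)) := by omega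
    rcases hcases with ⟨h1, h2⟩ | ⟨h1, h2⟩ | ⟨h1, h2⟩ | ⟨h1, h2⟩
    · exact iff_of_true h1 h2
    · exact iff_of_false (by omega) (by omega)
    · exfalso
      have ex : x = u := Fin.ext (by
        calc (x:ℕ) = f k (g k (x:ℕ)) := (fg hk hx2).symm
        _ = f k (g k (u:ℕ)) := by rw [h1]
        _ = (u:ℕ) := fg hk hu2)
      have ey : y = v := Fin.ext (by
        calc (y:ℕ) = f k (g k (y:ℕ)) := (fg hk hy2).symm
        _ = f k (g k (v:ℕ)) := by rw [h2]
        _ = (v:ℕ) := fg hk hv2)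
      exact hnedge (by rw [ex, ey])
    · exfalso
      have ex : x = v := Fin.ext (by
        calc (x:ℕ) = f k (g k (x:ℕ)) := (fg hk hx2).symm
        _ = f k (g k (v:ℕ)) := by rw [h1]
        _ = (v:ℕ) := fg hk hv2)
      have ey : y = u := Fin.ext (by
        calc (y:ℕ) = f k (g k (y:ℕ)) := (fg hk hy2).symm
        _ = f k (g k (u:ℕ)) := by rw [h2]
        _ = (u:ℕ) := fg hk hu2)
      exact hnedge (by rw [ex, ey, Sym2.eq_swap])

end MeanderAux

open MeanderAux in
/-- The meander of type `2|2|⋯|2|3` (with `k ≥ 1` blocks of size 2 followed by one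
block of size 3) is Frobenius. -/
theorem meander_twos_three_frobenius (k : ℕ) (hk : 1 ≤ k) :
    IsFrobenius (meander (List.replicate k 2 ++ [3])) := by
  have hs := sum_L (k := k)
  have hfin : ∀ i : ℕ, i ≤ 2*k+2 → f k i < (List.replicate k 2 ++ [3]).sum :=
    fun i hi => by have := f_le (k := k) (i := i) hi; omega
  constructor
  · -- Connected
    have key : ∀ i : ℕ, (hi : i ≤ 2*k+2) →
        (meander (List.replicate k 2 ++ [3])).Reachable
          ⟨f k 0, hfin 0 (by omega)⟩ ⟨f k i, hfin i hi⟩ := by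
      intro i
      induction i with
      | zero => intro _; exact SimpleGraph.Reachable.refl _
      | succ i ih =>
        intro hi
        have h1 := step hk (i := i) (by omega)
        have hadj : (meander (List.replicate k 2 ++ [3])).Adj
            ⟨f k i, hfin i (by omega)⟩ ⟨f k (i+1), hfin _ hi⟩ :=
          (meander_adj _ _).mpr ⟨h1.2, h1.1⟩
        exact (ih (by omega)).trans hadj.reachable
    have reach : ∀ a : Fin (List.replicate k 2 ++ [3]).sum,
        (meander (List.replicate k 2 ++ [3])).Reachable ⟨f k 0, hfin 0 (by omega)⟩ a := by
      intro a
      have ha2 : (a:ℕ) ≤ 2*k+2 := by have := a.isLt; omega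
      have := key (g k (a:ℕ)) (g_le hk ha2)
      have ea : (⟨f k (g k (a:ℕ)), hfin _ (g_le hk ha2)⟩ :
          Fin (List.replicate k 2 ++ [3]).sum) = a := Fin.ext (fg hk ha2)
      rwa [ea] at this
    have : Nonempty (Fin (List.replicate k 2 ++ [3]).sum) := ⟨⟨0, by omega⟩⟩
    exact ⟨fun a b => (reach a).symm.trans (reach b)⟩
  · -- Acyclic
    rw [SimpleGraph.isAcyclic_iff_forall_adj_isBridge]
    intro u v huv
    rw [SimpleGraph.isBridge_iff]
    obtain ⟨hne, hA⟩ := (meander_adj u v).mp huv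
    have hu2 : (u:ℕ) ≤ 2*k+2 := by have := u.isLt; omega
    have hv2 : (v:ℕ) ≤ 2*k+2 := by have := v.isLt; omega
    rcases adj_dist hk hu2 hv2 hA hne with hgd | hgd
    · exact no_reach hk u v hA hne hgd
    · intro hr
      refine no_reach hk v u (A_symm hA) (Ne.symm hne) hgd ?_
      rw [Sym2.eq_swap]
      exact hr.symm
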